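/- Let g be the Sensitivity-Preprocessing Function of f: 𝒟 → ℝ with nonnegative parameters {Δ_i}. Then for any database D with n entries, |f(D) − g(D)| ≤ max over permutations σ of [n] of ∑_{i=1}^{n} max{ |f(D_{σ(<i)} + x_{σ(i)}) − f(D_{σ(<i)})| − Δ_{σ(i)}, 0 }, where D_{σ(<i)} = (x_{σ(1)},...,x_{σ(i−1)}) is the prefix of D under ordering σ. -/

import Mathlib

variable {α : Type*} [DecidableEq α]

/-- The Sensitivity-Preprocessing Function of `f` with individual sensitivity
parameters `Δ`: `g ∅ = f ∅`, and for nonempty `D`, `g D = Upper D` if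
`Upper D ≤ f D`, `g D = Lower D` if `Lower D ≥ f D`, and `g D = f D` otherwise,
where `Upper D = min_{a ∈ D} (g (D.erase a) + Δ a)` and
`Lower D = max_{a ∈ D} (g (D.erase a) - Δ a)`. -/
noncomputable def SPF (f : Finset α → ℝ) (Δ : α → ℝ) : Finset α → ℝ := fun D =>
  if h : D.Nonempty then
    let U : ℝ := D.attach.inf' (Finset.attach_nonempty_iff.mpr h)
      (fun a => SPF f Δ (D.erase a.1) + Δ a.1)
    let L : ℝ := D.attach.sup' (Finset.attach_nonempty_iff.mpr h)
      (fun a => SPF f Δ (D.erase a.1) - Δ a.1)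
    if U ≤ f D then U
    else if f D ≤ L then L
    else f D
  else f ∅
termination_by D => D.card
decreasing_by all_goals exact Finset.card_erase_lt_of_mem a.2

theorem spf_step (f : Finset α → ℝ) (Δ : α → ℝ) (D : Finset α) (b : α) (hb : b ∈ D)
    (hg : |f D - SPF f Δ D| ≤ max (|f D - f (D.erase b)| - Δ b) 0
            + |f (D.erase b) - SPF f Δ (D.erase b)|)
    (ih : ∃ e' : Fin (D.erase b).card → α, Function.Injective e' ∧
        Finset.image e' Finset.univ = D.erase b ∧
        |f (D.erase b) - SPF f Δ (D.erase b)| ≤ ∑ j : Fin (D.erase b).card,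
          max (|f (insert (e' j) (Finset.image e' (Finset.univ.filter fun k => k < j)))
              - f (Finset.image e' (Finset.univ.filter fun k => k < j))| - Δ (e' j)) 0) :
    ∃ e : Fin D.card → α, Function.Injective e ∧ Finset.image e Finset.univ = D ∧
      |f D - SPF f Δ D| ≤ ∑ i : Fin D.card,
        max (|f (insert (e i) (Finset.image e (Finset.univ.filter fun j => j < i)))
              - f (Finset.image e (Finset.univ.filter fun j => j < i))| - Δ (e i)) 0 := by
  set m := (D.erase b).card with hm
  obtain ⟨e', hinj', himg', hb'⟩ := ih
  have hcard : D.card = m + 1 := (Finset.card_erase_add_one hb).symm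
  set E : ℕ → α := fun k => if hk : k < m then e' ⟨k, hk⟩ else b with hE
  have hElt : ∀ k (hk : k < m), E k = e' ⟨k, hk⟩ := fun k hk => dif_pos hk
  have hEm : E m = b := dif_neg (lt_irrefl m)
  have hrange : ∀ j : Fin m, e' j ∈ D.erase b := by
    intro j; rw [← himg']; exact Finset.mem_image_of_mem _ (Finset.mem_univ j)
  have hne : ∀ j : Fin m, e' j ≠ b := fun j => Finset.ne_of_mem_erase (hrange j)
  refine ⟨fun i => E i.val, ?_, ?_, ?_⟩
  · intro i j hij
    replace hij : E i.val = E j.val := hij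
    rcases lt_or_ge (i : ℕ) m with hi | hi <;> rcases lt_or_ge (j : ℕ) m with hj | hj
    · rw [hElt _ hi, hElt _ hj] at hij
      have := congrArg Fin.val (hinj' hij)
      exact Fin.ext this
    · have hj' : (j : ℕ) = m := by have := j.isLt; omega
      rw [hElt _ hi, hj', hEm] at hij; exact absurd hij (hne _)
    · have hi' : (i : ℕ) = m := by have := i.isLt; omega
      rw [hElt _ hj, hi', hEm] at hij; exact absurd hij.symm (hne _)
    · have := i.isLt; have := j.isLt
      exact Fin.ext (by omega)
  · ext x
    simp only [Finset.mem_image, Finset.mem_univ, true_and]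
    constructor
    · rintro ⟨i, rfl⟩
      by_cases hi : (i : ℕ) < m
      · rw [hElt _ hi]; exact Finset.mem_of_mem_erase (hrange _)
      · have hi' : (i : ℕ) = m := by have := i.isLt; omega
        rw [hi', hEm]; exact hb
    · intro hx
      by_cases hxb : x = b
      · exact ⟨⟨m, by omega⟩, by rw [hxb]; exact hEm⟩
      · have hxe : x ∈ D.erase b := Finset.mem_erase.mpr ⟨hxb, hx⟩
        rw [← himg'] at hxe
        obtain ⟨j, -, hj⟩ := Finset.mem_image.mp hxe
        refine ⟨⟨j, by have := j.isLt; omega⟩, ?_⟩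
        rw [hElt _ j.isLt]; exact hj
  · -- the sum bound
    have hprefix : ∀ k, k ≤ m →
        Finset.image (fun i : Fin D.card => E i.val)
            (Finset.univ.filter fun i : Fin D.card => (i : ℕ) < k)
          = Finset.image e' (Finset.univ.filter fun j : Fin m => (j : ℕ) < k) := by
      intro k hk
      ext x
      simp only [Finset.mem_image, Finset.mem_filter, Finset.mem_univ, true_and]
      constructor
      · rintro ⟨i, hik, rfl⟩
        have him : (i : ℕ) < m := lt_of_lt_of_le hik hk
        exact ⟨⟨i, him⟩, hik, (hElt _ him).symm⟩
      · rintro ⟨j, hjk, rfl⟩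
        exact ⟨⟨j, by have := j.isLt; omega⟩, hjk, hElt _ j.isLt⟩
    set Gn : ℕ → ℝ := fun k => max (|f (insert (E k)
        (Finset.image (fun i : Fin D.card => E i.val)
          (Finset.univ.filter fun i : Fin D.card => (i : ℕ) < k)))
      - f (Finset.image (fun i : Fin D.card => E i.val)
          (Finset.univ.filter fun i : Fin D.card => (i : ℕ) < k))| - Δ (E k)) 0 with hGn
    have hgoal : (∑ i : Fin D.card,
        max (|f (insert ((fun i : Fin D.card => E i.val) i)
              (Finset.image (fun i : Fin D.card => E i.val)
                (Finset.univ.filter fun j => j < i)))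
            - f (Finset.image (fun i : Fin D.card => E i.val)
                (Finset.univ.filter fun j => j < i))| - Δ ((fun i : Fin D.card => E i.val) i)) 0)
        = ∑ k ∈ Finset.range D.card, Gn k := by
      rw [← Fin.sum_univ_eq_sum_range Gn D.card]
      refine Finset.sum_congr rfl fun i _ => ?_
      simp only [hGn, Fin.lt_def]
    have hGnm : Gn m = max (|f D - f (D.erase b)| - Δ b) 0 := by
      have h1 : Finset.image (fun i : Fin D.card => E i.val)
          (Finset.univ.filter fun i : Fin D.card => (i : ℕ) < m) = D.erase b := by
        rw [hprefix m le_rfl]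
        have hfil : (Finset.univ.filter fun j : Fin m => (j : ℕ) < m) = Finset.univ :=
          Finset.filter_true_of_mem fun j _ => j.isLt
        rw [hfil, himg']
      rw [hGn]
      simp only [h1, hEm, Finset.insert_erase hb]
    have hsum' : (∑ j : Fin (D.erase b).card,
        max (|f (insert (e' j) (Finset.image e' (Finset.univ.filter fun k => k < j)))
            - f (Finset.image e' (Finset.univ.filter fun k => k < j))| - Δ (e' j)) 0)
        = ∑ k ∈ Finset.range m, Gn k := by
      rw [← Fin.sum_univ_eq_sum_range Gn m]
      refine Finset.sum_congr rfl fun j _ => ?_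
      have h2 : Gn j.val = max (|f (insert (e' j)
          (Finset.image e' (Finset.univ.filter fun k : Fin m => (k : ℕ) < (j : ℕ))))
          - f (Finset.image e' (Finset.univ.filter fun k : Fin m => (k : ℕ) < (j : ℕ)))|
          - Δ (e' j)) 0 := by
        rw [hGn]
        simp only [hprefix j.val (le_of_lt j.isLt), hElt _ j.isLt]
        rfl
      rw [h2]
      simp only [Fin.lt_def]
    rw [hgoal, hcard, Finset.sum_range_succ, ← hsum', hGnm]
    have := hb'
    linarith

theorem spf_key (f : Finset α → ℝ) (Δ : α → ℝ) :
    ∀ n (D : Finset α), D.card ≤ n →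
    ∃ e : Fin D.card → α, Function.Injective e ∧ Finset.image e Finset.univ = D ∧
      |f D - SPF f Δ D| ≤ ∑ i : Fin D.card,
        max (|f (insert (e i) (Finset.image e (Finset.univ.filter fun j => j < i)))
              - f (Finset.image e (Finset.univ.filter fun j => j < i))| - Δ (e i)) 0 := by
  have hsumnn : ∀ (D : Finset α) (e : Fin D.card → α),
      (0:ℝ) ≤ ∑ i : Fin D.card,
        max (|f (insert (e i) (Finset.image e (Finset.univ.filter fun j => j < i)))
              - f (Finset.image e (Finset.univ.filter fun j => j < i))| - Δ (e i)) 0 :=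
    fun D e => Finset.sum_nonneg fun i _ => le_max_right _ _
  have hempty : ∀ D : Finset α, D = ∅ →
      ∃ e : Fin D.card → α, Function.Injective e ∧ Finset.image e Finset.univ = D ∧
      |f D - SPF f Δ D| ≤ ∑ i : Fin D.card,
        max (|f (insert (e i) (Finset.image e (Finset.univ.filter fun j => j < i)))
              - f (Finset.image e (Finset.univ.filter fun j => j < i))| - Δ (e i)) 0 := by
    intro D hD
    have hc : D.card = 0 := by simp [hD]
    refine ⟨fun i => absurd i.isLt (by omega), fun i => absurd i.isLt (by omega), ?_, ?_⟩
    · ext x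
      simp only [Finset.mem_image, Finset.mem_univ, true_and, hD, Finset.notMem_empty,
        iff_false]
      rintro ⟨i, -⟩
      exact absurd i.isLt (by omega)
    · have hspf : SPF f Δ D = f D := by
        rw [SPF, dif_neg (by simp [hD] : ¬ D.Nonempty), hD]
      rw [hspf, sub_self, abs_zero]
      exact hsumnn D _
  intro n
  induction n with
  | zero =>
    intro D hD
    exact hempty D (Finset.card_eq_zero.mp (Nat.le_zero.mp hD))
  | succ n ihn =>
    intro D hD
    rcases D.eq_empty_or_nonempty with hD0 | h
    · exact hempty D hD0
    · have hatt := Finset.attach_nonempty_iff.mpr h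
      set U : ℝ := D.attach.inf' hatt (fun a => SPF f Δ (D.erase a.1) + Δ a.1) with hU
      set L : ℝ := D.attach.sup' hatt (fun a => SPF f Δ (D.erase a.1) - Δ a.1) with hL
      have hSPF : SPF f Δ D = if U ≤ f D then U else if f D ≤ L then L else f D := by
        rw [SPF]; rw [dif_pos h]
      have hcard : ∀ c ∈ D, (D.erase c).card ≤ n := by
        intro c hc
        have := Finset.card_erase_lt_of_mem hc
        omega
      by_cases h1 : U ≤ f D
      · obtain ⟨c, -, hc⟩ := Finset.exists_mem_eq_inf' hatt
          (fun a => SPF f Δ (D.erase a.1) + Δ a.1)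
        refine spf_step f Δ D c.1 c.2 ?_ (ihn _ (hcard c.1 c.2))
        have habs : |f D - SPF f Δ D| = f D - U := by
          rw [hSPF, if_pos h1, abs_of_nonneg (by linarith)]
        have h2 : f D - f (D.erase c.1) ≤ |f D - f (D.erase c.1)| := le_abs_self _
        have h3 : |f D - f (D.erase c.1)| - Δ c.1 ≤ max (|f D - f (D.erase c.1)| - Δ c.1) 0 :=
          le_max_left _ _
        have h4 : f (D.erase c.1) - SPF f Δ (D.erase c.1)
            ≤ |f (D.erase c.1) - SPF f Δ (D.erase c.1)| := le_abs_self _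
        rw [habs, hU, hc]
        linarith
      · by_cases h2 : f D ≤ L
        · obtain ⟨c, -, hc⟩ := Finset.exists_mem_eq_sup' hatt
            (fun a => SPF f Δ (D.erase a.1) - Δ a.1)
          refine spf_step f Δ D c.1 c.2 ?_ (ihn _ (hcard c.1 c.2))
          have habs : |f D - SPF f Δ D| = L - f D := by
            rw [hSPF, if_neg h1, if_pos h2, abs_of_nonpos (by linarith), neg_sub]
          have h3 : f (D.erase c.1) - f D ≤ |f D - f (D.erase c.1)| := by
            rw [abs_sub_comm]; exact le_abs_self _
          have h4 : |f D - f (D.erase c.1)| - Δ c.1 ≤ max (|f D - f (D.erase c.1)| - Δ c.1) 0 :=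
            le_max_left _ _
          have h5 : SPF f Δ (D.erase c.1) - f (D.erase c.1)
              ≤ |f (D.erase c.1) - SPF f Δ (D.erase c.1)| := by
            rw [abs_sub_comm]; exact le_abs_self _
          rw [habs, hL, hc]
          linarith
        · obtain ⟨c, hcmem⟩ := h
          refine spf_step f Δ D c hcmem ?_ (ihn _ (hcard c hcmem))
          have habs : |f D - SPF f Δ D| = 0 := by
            rw [hSPF, if_neg h1, if_neg h2, sub_self, abs_zero]
          rw [habs]
          have := abs_nonneg (f (D.erase c) - SPF f Δ (D.erase c))
          have : (0:ℝ) ≤ max (|f D - f (D.erase c)| - Δ c) 0 := le_max_right _ _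
          positivity


/-- Error bound for the Sensitivity-Preprocessing Function: `|f D − g D|` is at
most the maximum, over orderings `e` of the entries of `D`, of the sum of the
clipped marginal changes of `f` along the corresponding chain of prefixes
(stated equivalently via an existential, since the maximum is attained). -/
theorem stmt12 (f : Finset α → ℝ) (Δ : α → ℝ) (hΔ : ∀ a, 0 ≤ Δ a) (D : Finset α) :
    ∃ e : Fin D.card → α, Function.Injective e ∧ Finset.image e Finset.univ = D ∧
      |f D - SPF f Δ D| ≤ ∑ i : Fin D.card,
        max (|f (insert (e i) (Finset.image e (Finset.univ.filter fun j => j < i)))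
              - f (Finset.image e (Finset.univ.filter fun j => j < i))| - Δ (e i)) 0 := by
  exact spf_key f Δ D.card D le_rfl
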